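/- Let Ω : S^{d-1} → ℂ be square-integrable and extend it to ℝ^d \ {0} by homogeneity of degree zero; set k_Ω(x) = Ω(x)/|x|^d. Let R > 0, u ∈ ℝ^d with |u| ≤ R, and m ≥ 1. Then ∫_{2^m R ≤ |x| ≤ 2^{m+1} R} |Ω(x)|² · | |x+u|^{-2d} - |x|^{-2d} | dx ≤ C_d · ‖Ω‖²_{L²(S^{d-1})} · 2^{-m} · (2^m R)^{-d}. -/

import Mathlib

open MeasureTheory Metric Set

/-- For `Ω ∈ L²(S^{d-1})` extended 0-homogeneously, `R > 0`, `|u| ≤ R` and `m ≥ 1`: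
`∫_{2^m R ≤ |x| ≤ 2^{m+1}R} |Ω(x)|² ||x+u|^{-2d} - |x|^{-2d}| dx
  ≤ C_d ‖Ω‖²_{L²(S^{d-1})} 2^{-m} (2^m R)^{-d}`. -/
lemma pow_sub_pow_abs_le {M : ℝ} (hM : 0 ≤ M) :
    ∀ (n : ℕ) (s t : ℝ), |s| ≤ M → |t| ≤ M →
      |t ^ n - s ^ n| ≤ n * M ^ (n - 1) * |t - s| := by
  intro n
  induction n with
  | zero => intro s t _ _; simp
  | succ k ih =>
    intro s t hs ht
    have habs_t : |t ^ k| ≤ M ^ k := by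
      rw [abs_pow]; exact pow_le_pow_left₀ (abs_nonneg _) ht k
    have h1 : t ^ (k + 1) - s ^ (k + 1) = t ^ k * (t - s) + (t ^ k - s ^ k) * s := by ring
    have h2 : |t ^ (k + 1) - s ^ (k + 1)| ≤ M ^ k * |t - s| + (k * M ^ (k - 1) * |t - s|) * M := by
      rw [h1]
      refine (abs_add_le _ _).trans ?_
      gcongr
      · rw [abs_mul]
        exact mul_le_mul_of_nonneg_right habs_t (abs_nonneg _)
      · rw [abs_mul]
        exact mul_le_mul (ih s t hs ht) hs (abs_nonneg _) (by positivity)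
    refine h2.trans ?_
    rcases Nat.eq_zero_or_pos k with hk | hk
    · subst hk; norm_num
    · have hMk : M ^ (k - 1) * M = M ^ k := by
        rw [← pow_succ, Nat.sub_add_cancel hk]
      have hexp : (k : ℝ) * M ^ (k - 1) * |t - s| * M = k * M ^ k * |t - s| := by
        rw [← hMk]; ring
      rw [hexp]
      have hsimp : (↑(k + 1) : ℝ) * M ^ (k + 1 - 1) * |t - s|
          = M ^ k * |t - s| + ↑k * M ^ k * |t - s| := by
        push_cast [Nat.add_sub_cancel]
        ring
      rw [hsimp]

lemma key_pt (n : ℕ) (s t e : ℝ) (hs : 0 < s) (he : 0 ≤ e) (he2 : e ≤ 1 / 2)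
    (hts : |t - s| ≤ e * s) :
    |(t ^ n)⁻¹ - (s ^ n)⁻¹| ≤ (n * 2 ^ (2 * n)) * e * (s ^ n)⁻¹ := by
  have hes : e * s ≤ s / 2 := by nlinarith
  have ht_lb : s / 2 ≤ t := by have := abs_le.1 hts; linarith [this.1]
  have ht_ub : t ≤ 2 * s := by have := abs_le.1 hts; nlinarith [this.2]
  have ht0 : 0 < t := lt_of_lt_of_le (by positivity) ht_lb
  have hMs : |s| ≤ 2 * s := by rw [abs_of_pos hs]; linarith
  have hMt : |t| ≤ 2 * s := by rw [abs_of_pos ht0]; linarith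
  have hkey := pow_sub_pow_abs_le (by positivity : (0:ℝ) ≤ 2 * s) n s t hMs hMt
  have htn : (0:ℝ) < t ^ n := by positivity
  have hsn : (0:ℝ) < s ^ n := by positivity
  have hfact : (t ^ n)⁻¹ - (s ^ n)⁻¹ = (s ^ n - t ^ n) * ((t ^ n) * (s ^ n))⁻¹ := by
    field_simp
  rw [hfact, abs_mul, abs_inv]
  have h1 : |s ^ n - t ^ n| ≤ n * (2 * s) ^ (n - 1) * (e * s) := by
    rw [abs_sub_comm]
    exact hkey.trans (by gcongr)
  have h2 : |t ^ n * s ^ n|⁻¹ ≤ ((s / 2) ^ n * s ^ n)⁻¹ := by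
    rw [abs_of_pos (by positivity)]
    apply inv_anti₀ (by positivity)
    gcongr
  calc |s ^ n - t ^ n| * |t ^ n * s ^ n|⁻¹
      ≤ (n * (2 * s) ^ (n - 1) * (e * s)) * ((s / 2) ^ n * s ^ n)⁻¹ :=
        mul_le_mul h1 h2 (by positivity) (by positivity)
    _ ≤ (n * 2 ^ (2 * n)) * e * (s ^ n)⁻¹ := by
        rcases Nat.eq_zero_or_pos n with hn | hn
        · subst hn; simp
        · have hs' : s ≠ 0 := hs.ne'
          have hsn1 : s ^ (n - 1) * s = s ^ n := by
            rw [← pow_succ, Nat.sub_add_cancel hn]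
          have heq : ((n : ℝ) * (2 * s) ^ (n - 1) * (e * s)) * ((s / 2) ^ n * s ^ n)⁻¹
              = ((n : ℝ) * (2 ^ (n - 1) * 2 ^ n)) * e * (s ^ n)⁻¹ := by
            rw [mul_pow, div_pow, ← hsn1]
            field_simp
          rw [heq]
          gcongr
          rw [← pow_add]
          apply pow_le_pow_right₀ (by norm_num)
          omega

variable {d : ℕ}

lemma polar_comp (Ω : EuclideanSpace ℝ (Fin d) → ℂ)
    (hΩh : ∀ c : ℝ, 0 < c → ∀ x, Ω (c • x) = Ω x) (w : ℝ → ℝ)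
    (x : ({0}ᶜ : Set (EuclideanSpace ℝ (Fin d)))) :
    (fun p : sphere (0 : EuclideanSpace ℝ (Fin d)) 1 × Ioi (0 : ℝ) =>
        ‖Ω p.1.1‖ ^ 2 * w p.2.1) (homeomorphUnitSphereProd (EuclideanSpace ℝ (Fin d)) x)
      = ‖Ω x.1‖ ^ 2 * w ‖x.1‖ := by
  have hx : (x : EuclideanSpace ℝ (Fin d)) ≠ 0 := x.2
  have hn0 : (0 : ℝ) < ‖(x : EuclideanSpace ℝ (Fin d))‖ := norm_pos_iff.2 hx
  simp only [homeomorphUnitSphereProd_apply_fst_coe, homeomorphUnitSphereProd_apply_snd_coe]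
  rw [hΩh _ (inv_pos.2 hn0) x.1]

lemma polar_eq (hd : 1 ≤ d) (Ω : EuclideanSpace ℝ (Fin d) → ℂ)
    (hΩh : ∀ c : ℝ, 0 < c → ∀ x, Ω (c • x) = Ω x) (w : ℝ → ℝ) :
    (∫ x : EuclideanSpace ℝ (Fin d), ‖Ω x‖ ^ 2 * w ‖x‖) =
      (∫ θ : sphere (0 : EuclideanSpace ℝ (Fin d)) 1, ‖Ω θ‖ ^ 2
          ∂(volume : Measure (EuclideanSpace ℝ (Fin d))).toSphere) *
        ∫ r in Ioi (0 : ℝ), r ^ (d - 1) * w r := by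
  haveI : Nonempty (Fin d) := ⟨⟨0, hd⟩⟩
  have hdim : Module.finrank ℝ (EuclideanSpace ℝ (Fin d)) = d := finrank_euclideanSpace_fin
  have hrad : (∫ r : Ioi (0 : ℝ), w r.1 ∂(Measure.volumeIoiPow (d - 1)))
      = ∫ r in Ioi (0 : ℝ), r ^ (d - 1) * w r := by
    simp only [Measure.volumeIoiPow, ENNReal.ofReal]
    rw [integral_withDensity_eq_integral_smul
      ((measurable_subtype_coe.pow_const _).real_toNNReal) (fun r : Ioi (0:ℝ) => w r.1),
      integral_subtype_comap measurableSet_Ioi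
        (fun a : ℝ => Real.toNNReal (a ^ (d - 1)) • w a)]
    refine setIntegral_congr_fun measurableSet_Ioi fun x hx => ?_
    rw [NNReal.smul_def, Real.coe_toNNReal _ (pow_nonneg (le_of_lt hx) _), smul_eq_mul]
  calc (∫ x : EuclideanSpace ℝ (Fin d), ‖Ω x‖ ^ 2 * w ‖x‖)
      = ∫ x : ({0}ᶜ : Set (EuclideanSpace ℝ (Fin d))), ‖Ω x.1‖ ^ 2 * w ‖x.1‖
          ∂((volume : Measure (EuclideanSpace ℝ (Fin d))).comap Subtype.val) := by
        rw [integral_subtype_comap (measurableSet_singleton _).compl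
          (fun x => ‖Ω x‖ ^ 2 * w ‖x‖), restrict_compl_singleton]
    _ = ∫ p : sphere (0 : EuclideanSpace ℝ (Fin d)) 1 × Ioi (0 : ℝ), ‖Ω p.1.1‖ ^ 2 * w p.2.1
          ∂((volume : Measure (EuclideanSpace ℝ (Fin d))).toSphere.prod
            (Measure.volumeIoiPow (Module.finrank ℝ (EuclideanSpace ℝ (Fin d)) - 1))) := by
        rw [← (Measure.measurePreserving_homeomorphUnitSphereProd
            (volume : Measure (EuclideanSpace ℝ (Fin d)))).integral_comp
            (Homeomorph.measurableEmbedding _) (fun p => ‖Ω p.1.1‖ ^ 2 * w p.2.1)]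
        exact integral_congr_ae (Filter.Eventually.of_forall fun x =>
          (polar_comp Ω hΩh w x).symm)
    _ = (∫ θ : sphere (0 : EuclideanSpace ℝ (Fin d)) 1, ‖Ω θ‖ ^ 2
          ∂(volume : Measure (EuclideanSpace ℝ (Fin d))).toSphere) *
        ∫ r : Ioi (0 : ℝ), w r.1
          ∂(Measure.volumeIoiPow (Module.finrank ℝ (EuclideanSpace ℝ (Fin d)) - 1)) :=
        integral_prod_mul (fun θ : sphere (0 : EuclideanSpace ℝ (Fin d)) 1 => ‖Ω θ.1‖ ^ 2)
          (fun r : Ioi (0:ℝ) => w r.1)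
    _ = _ := by rw [hdim, hrad]

lemma polar_int (hd : 1 ≤ d) (Ω : EuclideanSpace ℝ (Fin d) → ℂ)
    (hΩh : ∀ c : ℝ, 0 < c → ∀ x, Ω (c • x) = Ω x) (w : ℝ → ℝ)
    (h1 : Integrable (fun θ : sphere (0 : EuclideanSpace ℝ (Fin d)) 1 => ‖Ω θ.1‖ ^ 2)
      (volume : Measure (EuclideanSpace ℝ (Fin d))).toSphere)
    (h2 : IntegrableOn (fun r : ℝ => r ^ (d - 1) * w r) (Ioi 0)) :
    Integrable (fun x : EuclideanSpace ℝ (Fin d) => ‖Ω x‖ ^ 2 * w ‖x‖) := by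
  haveI : Nonempty (Fin d) := ⟨⟨0, hd⟩⟩
  have hdim : Module.finrank ℝ (EuclideanSpace ℝ (Fin d)) = d := finrank_euclideanSpace_fin
  have h2' : Integrable (fun r : Ioi (0:ℝ) => w r.1) (Measure.volumeIoiPow (d - 1)) := by
    rw [Measure.volumeIoiPow]
    simp only [ENNReal.ofReal]
    rw [integrable_withDensity_iff_integrable_smul
      ((measurable_subtype_coe.pow_const _).real_toNNReal)]
    have heq : (fun r : Ioi (0:ℝ) => Real.toNNReal (r.1 ^ (d - 1)) • w r.1)
        = fun r : Ioi (0:ℝ) => r.1 ^ (d - 1) * w r.1 := by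
      funext r
      rw [NNReal.smul_def, Real.coe_toNNReal _ (pow_nonneg (le_of_lt r.2) _), smul_eq_mul]
    rw [heq]
    have h3 : Integrable (fun r : ℝ => r ^ (d - 1) * w r)
        (Measure.map ((↑) : Ioi (0:ℝ) → ℝ)
          (Measure.comap ((↑) : Ioi (0:ℝ) → ℝ) (volume : Measure ℝ))) := by
      rw [map_comap_subtype_coe measurableSet_Ioi]; exact h2
    exact ((MeasurableEmbedding.subtype_coe measurableSet_Ioi).integrable_map_iff).1 h3
  have hprod : Integrable
      (fun p : sphere (0 : EuclideanSpace ℝ (Fin d)) 1 × Ioi (0:ℝ) => ‖Ω p.1.1‖ ^ 2 * w p.2.1)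
      ((volume : Measure (EuclideanSpace ℝ (Fin d))).toSphere.prod
        (Measure.volumeIoiPow (Module.finrank ℝ (EuclideanSpace ℝ (Fin d)) - 1))) := by
    rw [hdim]; exact h1.mul_prod h2'
  have hsub : Integrable
      (fun x : ({0}ᶜ : Set (EuclideanSpace ℝ (Fin d))) => ‖Ω x.1‖ ^ 2 * w ‖x.1‖)
      ((volume : Measure (EuclideanSpace ℝ (Fin d))).comap Subtype.val) := by
    have h4 := ((Measure.measurePreserving_homeomorphUnitSphereProd
        (volume : Measure (EuclideanSpace ℝ (Fin d)))).integrable_comp_emb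
        (Homeomorph.measurableEmbedding _)).2 hprod
    exact h4.congr (Filter.Eventually.of_forall fun x => polar_comp Ω hΩh w x)
  have h5 : Integrable (fun x : EuclideanSpace ℝ (Fin d) => ‖Ω x‖ ^ 2 * w ‖x‖)
      (Measure.map Subtype.val
        ((volume : Measure (EuclideanSpace ℝ (Fin d))).comap Subtype.val)) :=
    ((MeasurableEmbedding.subtype_coe (measurableSet_singleton
      (0 : EuclideanSpace ℝ (Fin d))).compl).integrable_map_iff).2 hsub
  rwa [map_comap_subtype_coe (measurableSet_singleton _).compl,
    restrict_compl_singleton] at h5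


theorem stmt13 (d : ℕ) (hd : 1 ≤ d) :
    ∃ C > (0 : ℝ), ∀ Ω : EuclideanSpace ℝ (Fin d) → ℂ,
      Measurable Ω → (∀ c : ℝ, 0 < c → ∀ x, Ω (c • x) = Ω x) →
      MemLp (fun θ : Metric.sphere (0 : EuclideanSpace ℝ (Fin d)) 1 => Ω θ) 2
        (volume : Measure (EuclideanSpace ℝ (Fin d))).toSphere →
      ∀ R : ℝ, 0 < R → ∀ u : EuclideanSpace ℝ (Fin d), ‖u‖ ≤ R → ∀ m : ℕ, 1 ≤ m →
      (∫ x in {x : EuclideanSpace ℝ (Fin d) | 2 ^ m * R ≤ ‖x‖ ∧ ‖x‖ ≤ 2 ^ (m + 1) * R},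
          ‖Ω x‖ ^ 2 * |(‖x + u‖ ^ (2 * d : ℕ))⁻¹ - (‖x‖ ^ (2 * d : ℕ))⁻¹|)
        ≤ C * (∫ θ : Metric.sphere (0 : EuclideanSpace ℝ (Fin d)) 1,
              ‖Ω θ‖ ^ 2 ∂(volume : Measure (EuclideanSpace ℝ (Fin d))).toSphere) *
            ((2 : ℝ) ^ m)⁻¹ * ((2 ^ m * R) ^ (d : ℕ))⁻¹ := by
  have hC : (0:ℝ) < ((2 * d : ℕ) : ℝ) * 2 ^ (2 * (2 * d)) := by
    have h1 : (0:ℝ) < ((2 * d : ℕ) : ℝ) := by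
      have : 1 ≤ 2 * d := by omega
      exact_mod_cast Nat.lt_of_lt_of_le Nat.zero_lt_one this
    exact mul_pos h1 (by positivity)
  refine ⟨((2 * d : ℕ) : ℝ) * 2 ^ (2 * (2 * d)), hC, ?_⟩
  intro Ω hΩm hΩh hmem R hR u hu m hm1
  set C : ℝ := ((2 * d : ℕ) : ℝ) * 2 ^ (2 * (2 * d)) with hCdef
  set a : ℝ := 2 ^ m * R with ha_def
  have ha : 0 < a := by positivity
  set w : ℝ → ℝ := (Icc a (2 * a)).indicator (fun r => (r ^ (2 * d))⁻¹) with hw_def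
  set g0 : ℝ → ℝ := fun r => r ^ (d - 1) * (r ^ (2 * d))⁻¹ with hg0_def
  have hw_nonneg : ∀ r, 0 ≤ w r := fun r =>
    indicator_nonneg (fun r _ => inv_nonneg.2 ((even_two_mul d).pow_nonneg r)) r
  -- the set is the norm-preimage of `Icc a (2*a)`
  have hset : {x : EuclideanSpace ℝ (Fin d) | 2 ^ m * R ≤ ‖x‖ ∧ ‖x‖ ≤ 2 ^ (m + 1) * R}
      = (fun x : EuclideanSpace ℝ (Fin d) => ‖x‖) ⁻¹' (Icc a (2 * a)) := by
    have h2a : (2:ℝ) ^ (m + 1) * R = 2 * a := by rw [ha_def]; ring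
    ext x
    simp [mem_Icc, h2a, ha_def]
  have hA_meas : MeasurableSet
      ((fun x : EuclideanSpace ℝ (Fin d) => ‖x‖) ⁻¹' (Icc a (2 * a))) :=
    measurable_norm measurableSet_Icc
  -- integrability of |Ω|² on the sphere
  have h1 : Integrable (fun θ : sphere (0 : EuclideanSpace ℝ (Fin d)) 1 => ‖Ω θ.1‖ ^ 2)
      (volume : Measure (EuclideanSpace ℝ (Fin d))).toSphere := by
    have h := hmem.integrable_norm_rpow (by norm_num) (by norm_num)
    refine h.congr (Filter.Eventually.of_forall fun θ => ?_)
    show ‖Ω θ.1‖ ^ (ENNReal.toReal 2) = ‖Ω θ.1‖ ^ (2:ℕ)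
    rw [show (ENNReal.toReal 2) = ((2:ℕ):ℝ) by simp, Real.rpow_natCast]
  -- integrability of the radial weight
  have hIcc : IntegrableOn g0 (Icc a (2 * a)) := by
    apply ContinuousOn.integrableOn_Icc
    apply ContinuousOn.mul (continuous_pow _).continuousOn
    apply ContinuousOn.inv₀ (continuous_pow _).continuousOn
    intro r hr
    exact pow_ne_zero _ (ne_of_gt (lt_of_lt_of_le ha hr.1))
  have hw_eq : ∀ r, r ^ (d - 1) * w r = (Icc a (2 * a)).indicator g0 r := by
    intro r
    by_cases h : r ∈ Icc a (2 * a)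
    · rw [hw_def, indicator_of_mem h, indicator_of_mem h]
    · rw [hw_def, indicator_of_notMem h, indicator_of_notMem h, mul_zero]
  have h2 : IntegrableOn (fun r : ℝ => r ^ (d - 1) * w r) (Ioi 0) := by
    have : (fun r : ℝ => r ^ (d - 1) * w r) = (Icc a (2 * a)).indicator g0 := funext hw_eq
    rw [this]
    exact ((integrable_indicator_iff measurableSet_Icc).2 hIcc).integrableOn
  -- integrability of the majorant
  have hgint : Integrable
      (fun x : EuclideanSpace ℝ (Fin d) => C * (2 ^ m : ℝ)⁻¹ * (‖Ω x‖ ^ 2 * w ‖x‖)) :=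
    (polar_int hd Ω hΩh w h1 h2).const_mul _
  -- pointwise bound on the annulus
  have hfg : ∀ x ∈ (fun x : EuclideanSpace ℝ (Fin d) => ‖x‖) ⁻¹' (Icc a (2 * a)),
      ‖Ω x‖ ^ 2 * |(‖x + u‖ ^ (2 * d : ℕ))⁻¹ - (‖x‖ ^ (2 * d : ℕ))⁻¹|
        ≤ C * (2 ^ m : ℝ)⁻¹ * (‖Ω x‖ ^ 2 * w ‖x‖) := by
    intro x hx
    have hx' : ‖x‖ ∈ Icc a (2 * a) := hx
    have hxn : 0 < ‖x‖ := lt_of_lt_of_le ha hx'.1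
    have hwx : w ‖x‖ = (‖x‖ ^ (2 * d))⁻¹ := by rw [hw_def, indicator_of_mem hx']
    have he2 : ((2:ℝ) ^ m)⁻¹ ≤ 1 / 2 := by
      rw [one_div]
      apply inv_anti₀ (by norm_num)
      calc (2:ℝ) = 2 ^ 1 := (pow_one 2).symm
        _ ≤ 2 ^ m := pow_le_pow_right₀ (by norm_num) hm1
    have hts : |‖x + u‖ - ‖x‖| ≤ ((2:ℝ) ^ m)⁻¹ * ‖x‖ := by
      have h0 : |‖x + u‖ - ‖x‖| ≤ ‖u‖ := by
        have := abs_norm_sub_norm_le (x + u) x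
        simpa using this
      have h1' : ‖u‖ ≤ ((2:ℝ) ^ m)⁻¹ * a := by
        rw [ha_def, inv_mul_cancel_left₀ (by positivity : ((2:ℝ)^m) ≠ 0)]
        exact hu
      refine h0.trans (h1'.trans ?_)
      gcongr
      exact hx'.1
    have hkey := key_pt (2 * d) ‖x‖ ‖x + u‖ ((2:ℝ) ^ m)⁻¹ hxn (by positivity) he2 hts
    rw [hwx]
    calc ‖Ω x‖ ^ 2 * |(‖x + u‖ ^ (2 * d : ℕ))⁻¹ - (‖x‖ ^ (2 * d : ℕ))⁻¹|
        ≤ ‖Ω x‖ ^ 2 * ((((2 * d : ℕ) : ℝ) * 2 ^ (2 * (2 * d))) * ((2:ℝ) ^ m)⁻¹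
            * (‖x‖ ^ (2 * d))⁻¹) :=
          mul_le_mul_of_nonneg_left hkey (by positivity)
      _ = C * (2 ^ m : ℝ)⁻¹ * (‖Ω x‖ ^ 2 * (‖x‖ ^ (2 * d))⁻¹) := by
          rw [hCdef]; ring
  -- the radial integral bound
  have hJ : (∫ r in Ioi (0:ℝ), r ^ (d - 1) * w r) ≤ (a ^ d)⁻¹ := by
    have hfun : (fun r : ℝ => r ^ (d - 1) * w r) = (Icc a (2 * a)).indicator g0 := funext hw_eq
    rw [hfun]
    rw [setIntegral_indicator measurableSet_Icc]
    have hinter : Ioi (0:ℝ) ∩ Icc a (2 * a) = Icc a (2 * a) :=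
      inter_eq_self_of_subset_right (fun r hr => lt_of_lt_of_le ha hr.1)
    rw [hinter]
    have hptwise : ∀ r ∈ Icc a (2 * a), g0 r ≤ (a ^ (d + 1))⁻¹ := by
      intro r hr
      have hr0 : 0 < r := lt_of_lt_of_le ha hr.1
      have heq : g0 r = (r ^ (d + 1))⁻¹ := by
        show r ^ (d - 1) * (r ^ (2 * d))⁻¹ = (r ^ (d + 1))⁻¹
        rw [show 2 * d = (d - 1) + (d + 1) from by omega, pow_add, mul_inv, ← mul_assoc,
          mul_inv_cancel₀ (pow_ne_zero _ hr0.ne'), one_mul]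
      rw [heq]
      exact inv_anti₀ (by positivity) (pow_le_pow_left₀ ha.le hr.1 _)
    calc (∫ r in Icc a (2 * a), g0 r)
        ≤ ∫ _ in Icc a (2 * a), (a ^ (d + 1))⁻¹ := by
          refine setIntegral_mono_on hIcc ?_ measurableSet_Icc hptwise
          exact integrableOn_const measure_Icc_lt_top.ne
      _ = a * (a ^ (d + 1))⁻¹ := by
          rw [setIntegral_const, measureReal_def, Real.volume_Icc, smul_eq_mul]
          congr 1
          rw [ENNReal.toReal_ofReal (by linarith)]
          ring
      _ = (a ^ d)⁻¹ := by
          rw [pow_succ, mul_inv, mul_comm ((a^d)⁻¹) a⁻¹, ← mul_assoc,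
            mul_inv_cancel₀ ha.ne', one_mul]
  -- nonnegativity of the sphere integral
  have hIS : 0 ≤ ∫ θ : sphere (0 : EuclideanSpace ℝ (Fin d)) 1, ‖Ω θ.1‖ ^ 2
      ∂(volume : Measure (EuclideanSpace ℝ (Fin d))).toSphere :=
    integral_nonneg fun θ => by positivity
  -- assemble
  rw [hset]
  calc (∫ x in (fun x : EuclideanSpace ℝ (Fin d) => ‖x‖) ⁻¹' (Icc a (2 * a)),
        ‖Ω x‖ ^ 2 * |(‖x + u‖ ^ (2 * d : ℕ))⁻¹ - (‖x‖ ^ (2 * d : ℕ))⁻¹|)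
      ≤ ∫ x in (fun x : EuclideanSpace ℝ (Fin d) => ‖x‖) ⁻¹' (Icc a (2 * a)),
          C * (2 ^ m : ℝ)⁻¹ * (‖Ω x‖ ^ 2 * w ‖x‖) := by
        refine integral_mono_of_nonneg (Filter.Eventually.of_forall fun x => by positivity)
          hgint.integrableOn ?_
        exact (ae_restrict_iff' hA_meas).2 (Filter.Eventually.of_forall hfg)
    _ ≤ ∫ x : EuclideanSpace ℝ (Fin d), C * (2 ^ m : ℝ)⁻¹ * (‖Ω x‖ ^ 2 * w ‖x‖) := by
        refine setIntegral_le_integral hgint (Filter.Eventually.of_forall fun x => ?_)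
        have := hw_nonneg ‖x‖
        positivity
    _ = C * (2 ^ m : ℝ)⁻¹ * ∫ x : EuclideanSpace ℝ (Fin d), ‖Ω x‖ ^ 2 * w ‖x‖ :=
        integral_const_mul _ _
    _ = C * (2 ^ m : ℝ)⁻¹ *
        ((∫ θ : sphere (0 : EuclideanSpace ℝ (Fin d)) 1, ‖Ω θ.1‖ ^ 2
            ∂(volume : Measure (EuclideanSpace ℝ (Fin d))).toSphere) *
          ∫ r in Ioi (0:ℝ), r ^ (d - 1) * w r) := by
        rw [polar_eq hd Ω hΩh w]
    _ ≤ C * (2 ^ m : ℝ)⁻¹ *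
        ((∫ θ : sphere (0 : EuclideanSpace ℝ (Fin d)) 1, ‖Ω θ.1‖ ^ 2
            ∂(volume : Measure (EuclideanSpace ℝ (Fin d))).toSphere) * (a ^ d)⁻¹) := by
        have hC' : 0 ≤ C * (2 ^ m : ℝ)⁻¹ := by positivity
        refine mul_le_mul_of_nonneg_left ?_ hC'
        exact mul_le_mul_of_nonneg_left hJ hIS
    _ = C * (∫ θ : sphere (0 : EuclideanSpace ℝ (Fin d)) 1, ‖Ω θ.1‖ ^ 2
            ∂(volume : Measure (EuclideanSpace ℝ (Fin d))).toSphere) *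
          ((2 : ℝ) ^ m)⁻¹ * ((2 ^ m * R) ^ (d : ℕ))⁻¹ := by
        rw [← ha_def]; ring
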